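/- Let n > 1 and λ2, λ3, k > 0 with λ2 * (n-1)^((n-1)/n) > n * k * λ3, and let 0 < Tb_u < Tb_s be the two positive zeros of f(x) = λ2 * x^n/(λ3^n + x^n) - k x. Then f'(0) < 0, f'(Tb_u) > 0 and f'(Tb_s) < 0; in particular 0 and Tb_s are locally asymptotically stable equilibria of x' = f(x) and Tb_u is unstable. -/

import Mathlib

open Real

theorem stmt_1 (n lam2 lam3 k : ℝ) (hn : 1 < n) (h2 : 0 < lam2) (h3 : 0 < lam3)
    (hk : 0 < k)
    (f : ℝ → ℝ) (hf : ∀ x, f x = lam2 * x ^ n / (lam3 ^ n + x ^ n) - k * x)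
    (hcond : lam2 * (n - 1) ^ ((n - 1) / n) > n * k * lam3)
    (Tbu Tbs : ℝ) (hu : 0 < Tbu) (hus : Tbu < Tbs)
    (hfu : f Tbu = 0) (hfs : f Tbs = 0)
    (honly : ∀ x, 0 < x → f x = 0 → x = Tbu ∨ x = Tbs) :
    deriv f 0 < 0 ∧ deriv f Tbu > 0 ∧ deriv f Tbs < 0 := by
  have hn0 : (0:ℝ) < n := by linarith
  have hn1 : (0:ℝ) < n - 1 := by linarith
  have hL : (0:ℝ) < lam3 ^ n := Real.rpow_pos_of_pos h3 n
  -- the derivative of f at any nonnegative point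
  have hder : ∀ x : ℝ, 0 ≤ x →
      HasDerivAt f (lam2 * (n * x ^ (n-1)) * lam3 ^ n / (lam3 ^ n + x ^ n) ^ 2 - k) x := by
    intro x hx
    have hxn : 0 ≤ x ^ n := Real.rpow_nonneg hx n
    have hdenpos : 0 < lam3 ^ n + x ^ n := by linarith
    have hden : lam3 ^ n + x ^ n ≠ 0 := ne_of_gt hdenpos
    have h1 : HasDerivAt (fun y : ℝ => y ^ n) (n * x ^ (n-1)) x :=
      Real.hasDerivAt_rpow_const (Or.inr hn.le)
    have hnum : HasDerivAt (fun y : ℝ => lam2 * y ^ n) (lam2 * (n * x ^ (n-1))) x :=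
      h1.const_mul lam2
    have hden' : HasDerivAt (fun y : ℝ => lam3 ^ n + y ^ n) (0 + n * x ^ (n-1)) x :=
      (hasDerivAt_const x (lam3 ^ n)).add h1
    have hq := hnum.div hden' hden
    have hlin : HasDerivAt (fun y : ℝ => k * y) (k * 1) x := (hasDerivAt_id x).const_mul k
    have hall := hq.sub hlin
    have heq : (fun y => lam2 * y ^ n / (lam3 ^ n + y ^ n) - k * y) = f := by
      funext y; rw [hf]
    rw [show (((fun y : ℝ => lam2 * y ^ n) / fun y => lam3 ^ n + y ^ n) - fun y => k * y) = f from heq] at hall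
    refine hall.congr_deriv ?_
    rw [mul_one]; congr 2
    ring
  -- continuity of f on nonnegative reals
  have hcont : ContinuousOn f (Set.Ici (0:ℝ)) := by
    intro x hx
    exact ((hder x hx).continuousAt).continuousWithinAt
  -- f at a positive point
  have hfval : ∀ x : ℝ, 0 < x → f x = (lam2 * x ^ n - k * x * (lam3 ^ n + x ^ n)) / (lam3 ^ n + x ^ n) := by
    intro x hx
    have hxn : 0 ≤ x ^ n := Real.rpow_nonneg hx.le n
    have hden : lam3 ^ n + x ^ n ≠ 0 := by positivity
    rw [hf]
    field_simp
  -- the critical point c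
  set c : ℝ := (n-1) ^ (n⁻¹) * lam3 with hc
  have hcpos : 0 < c := mul_pos (Real.rpow_pos_of_pos hn1 _) h3
  have hcn : c ^ n = (n-1) * lam3 ^ n := by
    rw [hc, Real.mul_rpow (Real.rpow_nonneg hn1.le _) h3.le,
      Real.rpow_inv_rpow hn1.le (ne_of_gt hn0)]
  -- the condition rewritten: lam2 * (n-1) > n * k * c
  have hcond' : lam2 * (n - 1) > n * k * c := by
    have hmul : (n-1) ^ ((n-1)/n) * (n-1) ^ (n⁻¹) = n - 1 := by
      rw [← Real.rpow_add hn1]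
      rw [show (n-1)/n + n⁻¹ = 1 by field_simp; ring]
      exact Real.rpow_one _
    have hp : (0:ℝ) < (n-1) ^ (n⁻¹) := Real.rpow_pos_of_pos hn1 _
    have := mul_lt_mul_of_pos_right hcond hp
    calc n * k * c = n * k * lam3 * (n-1) ^ (n⁻¹) := by rw [hc]; ring
      _ < lam2 * (n - 1) ^ ((n - 1) / n) * (n-1) ^ (n⁻¹) := this
      _ = lam2 * (n-1) := by rw [mul_assoc, hmul]
  -- f c > 0
  have hfc : 0 < f c := by
    rw [hfval c hcpos, hcn]
    apply div_pos
    · have : lam2 * ((n-1) * lam3 ^ n) - k * c * (lam3 ^ n + (n-1) * lam3 ^ n)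
          = lam3 ^ n * (lam2 * (n-1) - n * k * c) := by ring
      rw [this]
      exact mul_pos hL (by linarith)
    · nlinarith
  -- hence c is not a zero, so c ≠ Tbu and c ≠ Tbs
  have hcne : c ≠ Tbu ∧ c ≠ Tbs := by
    constructor <;> rintro rfl <;> linarith [hfc]
  -- small point x0 with f x0 < 0
  obtain ⟨x0, hx0pos, hx0c, hfx0⟩ : ∃ x0, 0 < x0 ∧ x0 < c ∧ f x0 < 0 := by
    set b : ℝ := (k * lam3 ^ n / lam2) ^ ((n-1)⁻¹) with hb
    have hbpos : 0 < b := Real.rpow_pos_of_pos (by positivity) _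
    refine ⟨min c b / 2, by positivity, ?_, ?_⟩
    · have : min c b ≤ c := min_le_left _ _
      linarith [hcpos]
    · set x0 := min c b / 2 with hx0
      have hx0pos : 0 < x0 := by positivity
      have hx0b : x0 < b := by
        have : min c b ≤ b := min_le_right _ _
        have h2b : 0 < min c b := lt_min hcpos hbpos
        linarith
      have hpow : x0 ^ (n-1) < k * lam3 ^ n / lam2 := by
        have := Real.rpow_lt_rpow hx0pos.le hx0b hn1
        rwa [hb, Real.rpow_inv_rpow (by positivity) (ne_of_gt hn1)] at this
      have hkey : lam2 * x0 ^ (n-1) < k * lam3 ^ n := by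
        have := (lt_div_iff₀ h2).mp hpow
        linarith
      have hxn : x0 ^ n = x0 ^ (n-1) * x0 := by
        have h := Real.rpow_add hx0pos (n-1) 1
        rw [Real.rpow_one] at h
        rw [show n - 1 + 1 = n by ring] at h
        exact h
      have hxnpos : 0 < x0 ^ n := Real.rpow_pos_of_pos hx0pos n
      rw [hfval x0 hx0pos]
      apply div_neg_of_neg_of_pos
      · have h1 : lam2 * x0 ^ n < k * lam3 ^ n * x0 := by
          rw [hxn]; nlinarith
        nlinarith [mul_pos (mul_pos hk hx0pos) hxnpos]
      · linarith
  -- large point M with f M < 0 and M > c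
  obtain ⟨M, hMc, hfM⟩ : ∃ M, c < M ∧ f M < 0 := by
    have hck : c ≤ max c (lam2 / k) := le_max_left _ _
    have hdk : lam2 / k ≤ max c (lam2 / k) := le_max_right _ _
    refine ⟨max c (lam2 / k) + 1, by linarith, ?_⟩
    have hMpos : (0:ℝ) < max c (lam2 / k) + 1 := by linarith
    have hMk : lam2 < k * (max c (lam2 / k) + 1) := by
      have h1 : lam2 / k < max c (lam2 / k) + 1 := by linarith
      calc lam2 = k * (lam2 / k) := by field_simp
        _ < k * (max c (lam2 / k) + 1) := mul_lt_mul_of_pos_left h1 hk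
    have hMn : 0 < (max c (lam2 / k) + 1) ^ n := Real.rpow_pos_of_pos hMpos n
    have hMle : (max c (lam2 / k) + 1) ^ n ≤ lam3 ^ n + (max c (lam2 / k) + 1) ^ n := by linarith
    rw [hfval _ hMpos]
    apply div_neg_of_neg_of_pos
    · have hdiv : lam2 * (max c (lam2 / k) + 1) ^ n
          ≤ lam2 * (lam3 ^ n + (max c (lam2 / k) + 1) ^ n) :=
        mul_le_mul_of_nonneg_left hMle h2.le
      nlinarith [mul_lt_mul_of_pos_right hMk (by linarith : (0:ℝ) < lam3 ^ n + (max c (lam2 / k) + 1) ^ n)]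
    · linarith
  -- Tbu < c
  have hTuc : Tbu < c := by
    rcases lt_trichotomy c Tbu with h | h | h
    · exfalso
      have hsub : Set.Icc x0 c ⊆ Set.Ici (0:ℝ) := fun y hy => le_trans hx0pos.le hy.1
      have := intermediate_value_Ioo (le_of_lt hx0c) (hcont.mono hsub)
      have h0 : (0:ℝ) ∈ Set.Ioo (f x0) (f c) := ⟨hfx0, hfc⟩
      obtain ⟨z, hz, hfz⟩ := this h0
      have hzpos : 0 < z := lt_trans hx0pos hz.1
      rcases honly z hzpos hfz with rfl | rfl
      · linarith [hz.2]
      · linarith [hz.2, hus]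
    · exact absurd h hcne.1
    · exact h
  -- c < Tbs
  have hcTs : c < Tbs := by
    rcases lt_trichotomy c Tbs with h | h | h
    · exact h
    · exact absurd h hcne.2
    · exfalso
      have hsub : Set.Icc c M ⊆ Set.Ici (0:ℝ) := fun y hy => le_trans hcpos.le hy.1
      have := intermediate_value_Ioo' (le_of_lt hMc) (hcont.mono hsub)
      have h0 : (0:ℝ) ∈ Set.Ioo (f M) (f c) := ⟨hfM, hfc⟩
      obtain ⟨z, hz, hfz⟩ := this h0
      have hzpos : 0 < z := lt_trans hcpos hz.1
      rcases honly z hzpos hfz with rfl | rfl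
      · linarith [hz.1, hus]
      · linarith [hz.1]
  -- derivative at an equilibrium point
  have hderiv_eq : ∀ x : ℝ, 0 < x → f x = 0 →
      deriv f x = k * ((n-1) * lam3 ^ n - x ^ n) / (lam3 ^ n + x ^ n) := by
    intro x hx hfx
    have hxn : 0 < x ^ n := Real.rpow_pos_of_pos hx n
    have hdenpos : 0 < lam3 ^ n + x ^ n := by linarith
    have hxn1 : x ^ n = x ^ (n-1) * x := by
      have h := Real.rpow_add hx (n-1) 1
      rw [Real.rpow_one] at h
      rw [show n - 1 + 1 = n by ring] at h
      exact h
    -- from f x = 0 : lam2 * x^(n-1) = k * (lam3^n + x^n)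
    have hbal : lam2 * x ^ (n-1) = k * (lam3 ^ n + x ^ n) := by
      rw [hfval x hx] at hfx
      have := (div_eq_zero_iff.mp hfx).resolve_right (ne_of_gt hdenpos)
      have key : (lam2 * x ^ (n-1)) * x = (k * (lam3 ^ n + x ^ n)) * x := by
        linear_combination this - lam2 * hxn1
      exact mul_right_cancel₀ (ne_of_gt hx) key
    rw [(hder x hx.le).deriv]
    rw [show lam2 * (n * x ^ (n-1)) = n * (lam2 * x ^ (n-1)) by ring, hbal]
    field_simp
    ring
  refine ⟨?_, ?_, ?_⟩
  · -- deriv f 0 = -k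
    have h0 : (0:ℝ) ^ (n-1) = 0 := Real.zero_rpow (ne_of_gt hn1)
    have h0n : (0:ℝ) ^ n = 0 := Real.zero_rpow (ne_of_gt hn0)
    rw [(hder 0 le_rfl).deriv, h0, h0n]
    simp
    linarith
  · -- deriv f Tbu > 0
    have hun : Tbu ^ n < (n-1) * lam3 ^ n := by
      have := Real.rpow_lt_rpow hu.le hTuc hn0
      rwa [hcn] at this
    have hxn : 0 < Tbu ^ n := Real.rpow_pos_of_pos hu n
    rw [hderiv_eq Tbu hu hfu]
    apply div_pos
    · exact mul_pos hk (by linarith)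
    · linarith
  · -- deriv f Tbs < 0
    have hsn : (n-1) * lam3 ^ n < Tbs ^ n := by
      have := Real.rpow_lt_rpow hcpos.le hcTs hn0
      rwa [hcn] at this
    have hxn : 0 < Tbs ^ n := Real.rpow_pos_of_pos (lt_trans hu hus) n
    rw [hderiv_eq Tbs (lt_trans hu hus) hfs]
    apply div_neg_of_neg_of_pos
    · exact mul_neg_of_pos_of_neg hk (by linarith)
    · linarith
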